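/- Let R be a commutative ring, L ∈ R, d ≥ 1 an integer, and β a nonnegative rational. Suppose Z(t) = B(t) / ∏_{i∈I} (1 - L^{a_i} t^{N_i}) in R[[t]], where I is a finite set, B(t) ∈ R[t] is a polynomial of degree g, and for each i ∈ I the integers a_i ≥ 0, N_i ≥ 1 satisfy a_i ≥ β·N_i. Write Z(t) = Σ_{n≥0} γ_n t^n. Then for every n with n ≥ g, the coefficient γ_n is divisible by L^⌈β(n-g)⌉ in R. -/

import Mathlib

open PowerSeries

private lemma coeff_div_aux (R : Type*) [CommRing R] (L : R)
    (β : ℚ) (hβ : 0 ≤ β) (ι : Type*) (s : Finset ι) (a N : ι → ℕ)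
    (B : Polynomial R) (g : ℕ) (hg : B.natDegree = g) :
    ∀ Z : PowerSeries R, (∀ i ∈ s, 1 ≤ N i) → (∀ i ∈ s, β * (N i) ≤ a i) →
    Z * ∏ i ∈ s, (1 - PowerSeries.C (L ^ a i) * PowerSeries.X ^ N i)
        = (B : PowerSeries R) →
    ∀ n : ℕ, g ≤ n →
      L ^ (⌈β * ((n : ℚ) - g)⌉.toNat) ∣ PowerSeries.coeff n Z := by
  classical
  induction s using Finset.induction with
  | empty =>
      intro Z _ _ hZ n hn
      rw [Finset.prod_empty, mul_one] at hZ
      subst hZ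
      rcases eq_or_lt_of_le hn with h | h
      · subst h
        simp
      · have : (PowerSeries.coeff n) (B : PowerSeries R) = B.coeff n :=
          Polynomial.coeff_coe B n
        rw [this, Polynomial.coeff_eq_zero_of_natDegree_lt (hg ▸ h)]
        exact dvd_zero _
  | @insert i s' hi ih =>
      intro Z hN ha hZ
      have hNi : 1 ≤ N i := hN i (Finset.mem_insert_self i s')
      have haN : β * (N i) ≤ a i := ha i (Finset.mem_insert_self i s')
      set W := Z * (1 - PowerSeries.C (L ^ a i) * PowerSeries.X ^ N i) with hWdef
      have hW : W * ∏ j ∈ s', (1 - PowerSeries.C (L ^ a j) * PowerSeries.X ^ N j)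
          = (B : PowerSeries R) := by
        rw [Finset.prod_insert hi] at hZ
        rw [hWdef, mul_assoc]
        exact hZ
      have ihW := ih W (fun j hj => hN j (Finset.mem_insert_of_mem hj))
        (fun j hj => ha j (Finset.mem_insert_of_mem hj)) hW
      intro n
      induction n using Nat.strong_induction_on with
      | _ n IH =>
        intro hn
        have hco : PowerSeries.coeff n W = PowerSeries.coeff n Z -
            L ^ a i * (if N i ≤ n then PowerSeries.coeff (n - N i) Z else 0) := by
          rw [hWdef, mul_sub, mul_one, map_sub]
          congr 1
          have h1 : Z * (PowerSeries.C (L ^ a i) * PowerSeries.X ^ N i)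
              = (PowerSeries.C (L ^ a i) * Z) * PowerSeries.X ^ N i := by ring
          rw [h1, PowerSeries.coeff_mul_X_pow']
          split_ifs with h
          · rw [PowerSeries.coeff_C_mul]
          · simp
        have hZn : PowerSeries.coeff n Z = PowerSeries.coeff n W +
            L ^ a i * (if N i ≤ n then PowerSeries.coeff (n - N i) Z else 0) := by
          rw [hco]; ring
        rw [hZn]
        refine dvd_add (ihW n hn) ?_
        split_ifs with h
        · by_cases h2 : g ≤ n - N i
          · -- use inner induction hypothesis
            have hlt : n - N i < n := Nat.sub_lt (lt_of_lt_of_le hNi h) hNi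
            have hdvd := IH (n - N i) hlt h2
            -- exponent inequality
            have hcast : ((n - N i : ℕ) : ℚ) = (n : ℚ) - N i := by
              push_cast [Nat.cast_sub h]; ring
            have key : (⌈β * ((n : ℚ) - g)⌉).toNat
                ≤ a i + (⌈β * (((n - N i : ℕ) : ℚ) - g)⌉).toNat := by
              have h3 : ⌈β * ((n : ℚ) - g)⌉ ≤ a i + ⌈β * (((n - N i : ℕ) : ℚ) - g)⌉ := by
                refine Int.ceil_le.mpr ?_
                push_cast
                have h4 : β * ((n : ℚ) - g) = β * (((n - N i : ℕ) : ℚ) - g) + β * N i := by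
                  rw [hcast]; ring
                rw [h4]
                have h5 : β * (((n - N i : ℕ) : ℚ) - g) ≤ ⌈β * (((n - N i : ℕ) : ℚ) - g)⌉ :=
                  Int.le_ceil _
                linarith
              have h6 : (0:ℤ) ≤ ⌈β * (((n - N i : ℕ) : ℚ) - g)⌉ := by
                refine Int.ceil_nonneg ?_
                have : (0:ℚ) ≤ ((n - N i : ℕ) : ℚ) - g := by
                  have := (Nat.cast_le (α := ℚ)).mpr h2
                  linarith
                positivity
              omega
            calc L ^ (⌈β * ((n : ℚ) - g)⌉).toNat
                ∣ L ^ (a i + (⌈β * (((n - N i : ℕ) : ℚ) - g)⌉).toNat) := pow_dvd_pow L key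
              _ = L ^ a i * L ^ (⌈β * (((n - N i : ℕ) : ℚ) - g)⌉).toNat := pow_add L _ _
              _ ∣ L ^ a i * PowerSeries.coeff (n - N i) Z := mul_dvd_mul_left _ hdvd
          · -- n - N i < g : exponent bounded by a i
            have key : (⌈β * ((n : ℚ) - g)⌉).toNat ≤ a i := by
              have hlt2 : n < g + N i := by omega
              have h3 : (n : ℚ) - g ≤ N i := by
                have := (Nat.cast_lt (α := ℚ)).mpr hlt2
                push_cast at this ⊢
                linarith
              have h4 : β * ((n : ℚ) - g) ≤ a i := by
                calc β * ((n : ℚ) - g) ≤ β * N i := by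
                      exact mul_le_mul_of_nonneg_left h3 hβ
                  _ ≤ a i := haN
              have h5 : ⌈β * ((n : ℚ) - g)⌉ ≤ (a i : ℤ) := Int.ceil_le.mpr (by exact_mod_cast h4)
              omega
            exact (pow_dvd_pow L key).mul_right _
        · simp

/-- Proposition 4.3 (abstract form): slope bounds force `L`-divisibility of the
coefficients of `Z(t)`. -/
theorem coeff_divisibility (R : Type*) [CommRing R] (L : R) (d : ℕ) (hd : 1 ≤ d)
    (β : ℚ) (hβ : 0 ≤ β) (ι : Type*) (s : Finset ι) (a N : ι → ℕ)
    (hN : ∀ i ∈ s, 1 ≤ N i) (ha : ∀ i ∈ s, β * (N i) ≤ a i)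
    (B : Polynomial R) (g : ℕ) (hg : B.natDegree = g)
    (Z : PowerSeries R)
    (hZ : Z * ∏ i ∈ s, (1 - PowerSeries.C (L ^ a i) * PowerSeries.X ^ N i)
        = (B : PowerSeries R)) :
    ∀ n : ℕ, g ≤ n →
      PowerSeries.coeff n Z ∈ Ideal.span {L ^ (⌈β * ((n : ℚ) - g)⌉.toNat)} := by
  intro n hn
  rw [Ideal.mem_span_singleton]
  exact coeff_div_aux R L β hβ ι s a N B g hg Z hN ha hZ n hn
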